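/- There exists a unique γ† > 0 such that h(γ†) = 0, where h(γ) = 2γ² + γ − (1+γ)² ln(1+γ); moreover h(γ) > 0 for 0 < γ < γ† and h(γ) < 0 for γ > γ†. -/

import Mathlib

open Real Set

noncomputable def Hfun : ℝ → ℝ := fun x => 2 * x ^ 2 + x - (1 + x) ^ 2 * Real.log (1 + x)

noncomputable def kfun : ℝ → ℝ := fun x => 3 * x / (1 + x) - 2 * Real.log (1 + x)

lemma hasDerivAt_kfun (x : ℝ) (hx : -1 < x) :
    HasDerivAt kfun ((1 - 2 * x) / (1 + x) ^ 2) x := by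
  have hne : (1 : ℝ) + x ≠ 0 := by linarith
  have h1 : HasDerivAt (fun y : ℝ => 1 + y) 1 x := by
    simpa using (hasDerivAt_id x).const_add 1
  have h2 : HasDerivAt (fun y : ℝ => 3 * y) 3 x := by
    simpa using (hasDerivAt_id x).const_mul 3
  have hdiv : HasDerivAt (fun y : ℝ => 3 * y / (1 + y))
      ((3 * (1 + x) - 3 * x * 1) / (1 + x) ^ 2) x := h2.div h1 hne
  have hlog : HasDerivAt (fun y : ℝ => Real.log (1 + y)) (1 / (1 + x)) x := by
    simpa using h1.log hne
  have := hdiv.sub ((hlog.const_mul 2))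
  refine this.congr_deriv ?_
  field_simp
  ring

lemma hasDerivAt_Hfun (x : ℝ) (hx : -1 < x) :
    HasDerivAt Hfun ((1 + x) * kfun x) x := by
  have hne : (1 : ℝ) + x ≠ 0 := by linarith
  have h1 : HasDerivAt (fun y : ℝ => 1 + y) 1 x := by
    simpa using (hasDerivAt_id x).const_add 1
  have hlog : HasDerivAt (fun y : ℝ => Real.log (1 + y)) (1 / (1 + x)) x := by
    simpa using h1.log hne
  have hsq : HasDerivAt (fun y : ℝ => (1 + y) ^ 2) (2 * (1 + x) ^ 1 * 1) x := h1.pow 2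
  have hmul : HasDerivAt (fun y : ℝ => (1 + y) ^ 2 * Real.log (1 + y))
      (2 * (1 + x) ^ 1 * 1 * Real.log (1 + x) + (1 + x) ^ 2 * (1 / (1 + x))) x :=
    hsq.mul hlog
  have hpoly : HasDerivAt (fun y : ℝ => 2 * y ^ 2 + y) (2 * (2 * x ^ 1 * 1) + 1) x := by
    exact ((hasDerivAt_id x).pow 2 |>.const_mul 2).add (hasDerivAt_id x)
  have := hpoly.sub hmul
  refine this.congr_deriv ?_
  unfold kfun
  field_simp
  ring

lemma cont_kfun : ∀ x ∈ Ici (0:ℝ), ContinuousAt kfun x := by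
  intro x hx
  exact (hasDerivAt_kfun x (by simp at hx; linarith)).continuousAt

lemma cont_Hfun : ∀ x ∈ Ici (0:ℝ), ContinuousAt Hfun x := by
  intro x hx
  exact (hasDerivAt_Hfun x (by simp at hx; linarith)).continuousAt

lemma kfun_zero : kfun 0 = 0 := by simp [kfun]

lemma Hfun_zero : Hfun 0 = 0 := by simp [Hfun]

lemma kfun_half_pos : 0 < kfun (1/2) := by
  have he : (9:ℝ)/4 < Real.exp 1 := by
    have := Real.exp_one_gt_d9; linarith
  have hexphalf : (3:ℝ)/2 < Real.exp (1/2) := by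
    have h2 : Real.exp (1/2) * Real.exp (1/2) = Real.exp 1 := by
      rw [← Real.exp_add]; norm_num
    nlinarith [Real.exp_pos (1/2 : ℝ)]
  have hlog : Real.log (3/2) < 1/2 := by
    rw [Real.log_lt_iff_lt_exp (by norm_num)]
    exact hexphalf
  have : (1 + (1:ℝ)/2) = 3/2 := by norm_num
  simp only [kfun, this]
  nlinarith

lemma kfun_two_neg : kfun 2 < 0 := by
  have hlog : (1:ℝ) < Real.log 3 := by
    rw [Real.lt_log_iff_exp_lt (by norm_num)]
    have := Real.exp_one_lt_d9; linarith
  have : (1 + (2:ℝ)) = 3 := by norm_num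
  simp only [kfun, this]
  nlinarith

lemma kfun_mono : StrictMonoOn kfun (Icc 0 (1/2 : ℝ)) := by
  apply strictMonoOn_of_deriv_pos (convex_Icc _ _)
  · exact fun x hx => (cont_kfun x (mem_of_mem_of_subset hx (Icc_subset_Ici_self))).continuousWithinAt
  · intro x hx
    rw [interior_Icc] at hx
    rw [(hasDerivAt_kfun x (by linarith [hx.1])).deriv]
    have h1 : (0:ℝ) < 1 + x := by linarith [hx.1]
    have h2 : (0:ℝ) < 1 - 2 * x := by linarith [hx.2]
    positivity

lemma kfun_anti : StrictAntiOn kfun (Ici (1/2 : ℝ)) := by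
  apply strictAntiOn_of_deriv_neg (convex_Ici _)
  · exact fun x hx => (cont_kfun x (mem_of_mem_of_subset hx (Ici_subset_Ici.2 (by norm_num)))).continuousWithinAt
  · intro x hx
    rw [interior_Ici] at hx
    rw [(hasDerivAt_kfun x (by simp at hx; linarith)).deriv]
    have h1 : (0:ℝ) < 1 + x := by simp at hx; linarith
    have h2 : 1 - 2 * x < 0 := by simp at hx; linarith
    exact div_neg_of_neg_of_pos h2 (by positivity)

theorem stmt5 (h : ℝ → ℝ)
    (hh : ∀ γ : ℝ, h γ = 2 * γ ^ 2 + γ - (1 + γ) ^ 2 * Real.log (1 + γ)) :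
    ∃ γd : ℝ, 0 < γd ∧ h γd = 0 ∧
      (∀ γ : ℝ, 0 < γ → γ < γd → 0 < h γ) ∧
      (∀ γ : ℝ, γd < γ → h γ < 0) ∧
      (∀ γ' : ℝ, 0 < γ' → h γ' = 0 → γ' = γd) := by
  have hH : ∀ γ, h γ = Hfun γ := fun γ => hh γ
  -- find root γ₁ of kfun in [1/2, 2]
  have hksub : (0:ℝ) ∈ Icc (kfun 2) (kfun (1/2)) :=
    ⟨le_of_lt kfun_two_neg, le_of_lt kfun_half_pos⟩
  have hkcont : ContinuousOn kfun (Icc (1/2 : ℝ) 2) := fun x hx =>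
    (cont_kfun x (le_trans (by norm_num) hx.1)).continuousWithinAt
  obtain ⟨γ₁, hγ₁mem, hγ₁⟩ := intermediate_value_Icc' (by norm_num : (1/2:ℝ) ≤ 2) hkcont hksub
  have hγ₁half : 1/2 ≤ γ₁ := hγ₁mem.1
  have hγ₁two : γ₁ ≤ 2 := hγ₁mem.2
  have hγ₁pos : 0 < γ₁ := by linarith
  have hγ₁gt : 1/2 < γ₁ := by
    rcases lt_or_eq_of_le hγ₁half with H | H
    · exact H
    · exfalso; rw [← H] at hγ₁; linarith [kfun_half_pos]
  -- kfun positive on (0, γ₁), negative on (γ₁, ∞)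
  have kpos : ∀ x, 0 < x → x < γ₁ → 0 < kfun x := by
    intro x hx0 hxγ₁
    rcases le_or_gt x (1/2) with hx | hx
    · have := kfun_mono (by constructor <;> norm_num) ⟨le_of_lt hx0, hx⟩ hx0
      rw [kfun_zero] at this; exact this
    · have := kfun_anti (le_of_lt hx) (le_of_lt (lt_trans hx hxγ₁)) hxγ₁
      rw [hγ₁] at this; exact this
  have kneg : ∀ x, γ₁ < x → kfun x < 0 := by
    intro x hx
    have := kfun_anti (le_of_lt hγ₁gt) (by simp; linarith) hx
    rw [hγ₁] at this; exact this
  -- Hfun strictly mono on [0, γ₁], strictly anti on [γ₁, ∞)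
  have Hmono : StrictMonoOn Hfun (Icc 0 γ₁) := by
    apply strictMonoOn_of_deriv_pos (convex_Icc _ _)
    · exact fun x hx => (cont_Hfun x hx.1).continuousWithinAt
    · intro x hx
      rw [interior_Icc] at hx
      rw [(hasDerivAt_Hfun x (by linarith [hx.1])).deriv]
      exact mul_pos (by linarith [hx.1]) (kpos x hx.1 hx.2)
  have Hanti : StrictAntiOn Hfun (Ici γ₁) := by
    apply strictAntiOn_of_deriv_neg (convex_Ici _)
    · exact fun x hx => (cont_Hfun x (le_trans (le_of_lt hγ₁pos) hx)).continuousWithinAt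
    · intro x hx
      rw [interior_Ici] at hx
      rw [(hasDerivAt_Hfun x (by linarith [lt_trans hγ₁pos hx])).deriv]
      exact mul_neg_of_pos_of_neg (by linarith [lt_trans hγ₁pos hx]) (kneg x hx)
  have Hγ₁pos : 0 < Hfun γ₁ := by
    have := Hmono (left_mem_Icc.2 (le_of_lt hγ₁pos)) ⟨le_of_lt hγ₁pos, le_refl _⟩ hγ₁pos
    rw [Hfun_zero] at this; exact this
  have H3neg : Hfun 3 < 0 := by
    have hlog2 : (0.6931471803:ℝ) < Real.log 2 := Real.log_two_gt_d9
    have h4 : Real.log 4 = 2 * Real.log 2 := by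
      rw [show (4:ℝ) = 2^2 by norm_num, Real.log_pow]; push_cast; ring
    have : (1 + (3:ℝ)) = 4 := by norm_num
    simp only [Hfun, this]
    rw [h4]; nlinarith
  -- root of Hfun on [γ₁, 3]
  have hγ₁three : γ₁ ≤ 3 := by linarith
  have hHcont : ContinuousOn Hfun (Icc γ₁ 3) := fun x hx =>
    (cont_Hfun x (le_trans (le_of_lt hγ₁pos) hx.1)).continuousWithinAt
  have hHsub : (0:ℝ) ∈ Icc (Hfun 3) (Hfun γ₁) := ⟨le_of_lt H3neg, le_of_lt Hγ₁pos⟩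
  obtain ⟨γd, hγdmem, hγd⟩ := intermediate_value_Icc' hγ₁three hHcont hHsub
  have hγdγ₁ : γ₁ < γd := by
    rcases lt_or_eq_of_le hγdmem.1 with H | H
    · exact H
    · exfalso; rw [← H] at hγd; linarith
  have hγdpos : 0 < γd := lt_trans hγ₁pos hγdγ₁
  have Hposlt : ∀ γ : ℝ, 0 < γ → γ < γd → 0 < Hfun γ := by
    intro γ hγ0 hγd'
    rcases le_or_gt γ γ₁ with hle | hlt
    · have := Hmono (left_mem_Icc.2 (le_of_lt hγ₁pos)) ⟨le_of_lt hγ0, hle⟩ hγ0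
      rw [Hfun_zero] at this; exact this
    · have := Hanti (le_of_lt hlt) (le_of_lt (lt_trans hlt hγd')) hγd'
      rw [hγd] at this; exact this
  have Hneggt : ∀ γ : ℝ, γd < γ → Hfun γ < 0 := by
    intro γ hγ
    have := Hanti (le_of_lt hγdγ₁) (by simp; linarith) hγ
    rw [hγd] at this; exact this
  refine ⟨γd, hγdpos, by rw [hH]; exact hγd, ?_, ?_, ?_⟩
  · intro γ hγ0 hγ1; rw [hH]; exact Hposlt γ hγ0 hγ1
  · intro γ hγ; rw [hH]; exact Hneggt γ hγ
  · intro γ' hγ'0 hγ'eq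
    rw [hH] at hγ'eq
    rcases lt_trichotomy γ' γd with H | H | H
    · exact absurd hγ'eq (ne_of_gt (Hposlt γ' hγ'0 H))
    · exact H
    · exact absurd hγ'eq (ne_of_lt (Hneggt γ' H))
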